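/- Let Ω ⊊ ℂ be a simply connected domain and ζ ∈ ℂ be such that ζ + t ∈ Ω for all t ≤ 0, and suppose there exists t₀ ≤ −e such that dist(ζ + t, ∂Ω) = 1/log(−t) for all t ≤ t₀. Then for every biholomorphism f : Ω → 𝔻, lim_{t → −∞} d_𝔻(f(ζ), f(ζ + t))/t² = 0. (This is the first construction estimate in the proof of Proposition 6.1, obtained from the upper bound d_Ω(u, v) ≤ ∫_Γ |dζ'|/dist(ζ', ∂Ω) along the horizontal segment Γ = [ζ + t, ζ + t₀].) -/

import Mathlib

open Filter Set

/-- The inverse hyperbolic tangent. -/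
noncomputable def arctanh (x : ℝ) : ℝ := (1 / 2) * Real.log ((1 + x) / (1 - x))

/-- The hyperbolic distance of the unit disc:
`d_𝔻(z, w) = arctanh |(z - w)/(1 - conj z · w)|`. -/
noncomputable def dD (z w : ℂ) : ℝ :=
  arctanh ‖(z - w) / (1 - (starRingEnd ℂ) z * w)‖

def unitDisc : Set ℂ := {z : ℂ | ‖z‖ < 1}

/-- `Ω` is a simply connected domain, a proper subdomain of `ℂ`. -/
def IsSCDomain (Ω : Set ℂ) : Prop :=
  IsOpen Ω ∧ IsConnected Ω ∧ Ω ≠ Set.univ ∧ SimplyConnectedSpace Ω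

/-! ### Auxiliary lemmas -/

noncomputable def rho (z w : ℂ) : ℝ := ‖(z - w) / (1 - (starRingEnd ℂ) z * w)‖

lemma normSq_key (z w : ℂ) :
    Complex.normSq (1 - (starRingEnd ℂ) z * w) - Complex.normSq (z - w)
      = (1 - Complex.normSq z) * (1 - Complex.normSq w) := by
  simp only [Complex.normSq_apply, Complex.sub_re, Complex.sub_im, Complex.mul_re, Complex.mul_im,
    Complex.one_re, Complex.one_im, Complex.conj_re, Complex.conj_im]
  ring

lemma rho_nonneg (z w : ℂ) : 0 ≤ rho z w := norm_nonneg _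

lemma normSq_lt_one {z : ℂ} (hz : ‖z‖ < 1) : Complex.normSq z < 1 := by
  rw [← Complex.sq_norm]; nlinarith [norm_nonneg z]

lemma denom_ne_zero {z w : ℂ} (hz : ‖z‖ < 1) (hw : ‖w‖ < 1) :
    1 - (starRingEnd ℂ) z * w ≠ 0 := by
  intro h
  have h2 : ‖(starRingEnd ℂ) z * w‖ < 1 := by
    rw [norm_mul, Complex.norm_conj]
    calc ‖z‖ * ‖w‖ ≤ ‖z‖ * 1 :=
          mul_le_mul_of_nonneg_left hw.le (norm_nonneg z)
    _ < 1 := by simpa using hz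
  have : (starRingEnd ℂ) z * w = 1 := by linear_combination -h
  rw [this] at h2; simp at h2

lemma rho_lt_one {z w : ℂ} (hz : ‖z‖ < 1) (hw : ‖w‖ < 1) :
    rho z w < 1 := by
  have hd := denom_ne_zero hz hw
  have hkey := normSq_key z w
  have hz2 := normSq_lt_one hz
  have hw2 := normSq_lt_one hw
  have hlt : Complex.normSq (z - w) < Complex.normSq (1 - (starRingEnd ℂ) z * w) := by
    nlinarith [Complex.normSq_nonneg z, Complex.normSq_nonneg w]
  rw [rho, norm_div, div_lt_one (norm_pos_iff.mpr hd)]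
  have h1 : ‖z - w‖ ^ 2 < ‖1 - (starRingEnd ℂ) z * w‖ ^ 2 := by
    rwa [Complex.sq_norm, Complex.sq_norm]
  exact lt_of_pow_lt_pow_left₀ 2 (norm_nonneg _) h1

lemma rho_comm (z w : ℂ) : rho z w = rho w z := by
  rw [rho, rho, norm_div, norm_div]
  congr 1
  · simpa using norm_sub_rev z w
  · rw [← Complex.norm_conj (1 - (starRingEnd ℂ) z * w)]
    congr 1
    simp [mul_comm]

lemma ball_subset_of_frontier {Ω : Set ℂ} (hO : IsOpen Ω) {x : ℂ} (hx : x ∈ Ω) :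
    Metric.ball x (Metric.infDist x (frontier Ω)) ⊆ Ω := by
  set r := Metric.infDist x (frontier Ω)
  intro y hy
  by_contra hyO
  have hball : IsPreconnected (Metric.ball x r) := (convex_ball x r).isPreconnected
  have hdisj : Metric.ball x r ⊆ (frontier Ω)ᶜ := Metric.ball_infDist_subset_compl
  have hcover : Metric.ball x r ⊆ Ω ∪ (closure Ω)ᶜ := by
    intro z hz
    by_cases hzc : z ∈ closure Ω
    · left
      have : z ∉ frontier Ω := hdisj hz
      rw [frontier, hO.interior_eq] at this
      exact not_not.mp fun h => this ⟨hzc, h⟩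
    · exact Or.inr hzc
  have h1 : (Metric.ball x r ∩ Ω).Nonempty := ⟨x, Metric.mem_ball_self (by
      rcases Metric.mem_ball'.mp hy with h
      exact lt_of_le_of_lt dist_nonneg (by rwa [dist_comm] at h)), hx⟩
  have h2 : (Metric.ball x r ∩ (closure Ω)ᶜ).Nonempty := by
    refine ⟨y, hy, fun hc => ?_⟩
    have : y ∈ frontier Ω := by
      rw [frontier, hO.interior_eq]; exact ⟨hc, hyO⟩
    exact hdisj hy this
  obtain ⟨z, _, hz1, hz2⟩ := hball Ω (closure Ω)ᶜ hO (isClosed_closure.isOpen_compl) hcover h1 h2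
  exact hz2 (subset_closure hz1)

/-- Schwarz–Pick at the center. -/
lemma schwarz_pick {H : ℂ → ℂ} (hd : DifferentiableOn ℂ H (Metric.ball 0 1))
    (hm : Set.MapsTo H (Metric.ball 0 1) (Metric.ball 0 1)) {s : ℂ}
    (hs : ‖s‖ < 1) : rho (H 0) (H s) ≤ ‖s‖ := by
  set z := H 0 with hz0
  have hmem : ∀ {w : ℂ}, w ∈ Metric.ball (0:ℂ) 1 → ‖H w‖ < 1 := by
    intro w hw
    have := hm hw
    rwa [Metric.mem_ball, Complex.dist_eq, sub_zero] at this
  have h0 : (0:ℂ) ∈ Metric.ball (0:ℂ) 1 := by simp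
  have hzlt : ‖z‖ < 1 := hmem h0
  set K : ℂ → ℂ := fun w => (z - H w) / (1 - (starRingEnd ℂ) z * H w) with hK
  have hKd : DifferentiableOn ℂ K (Metric.ball 0 1) := by
    apply DifferentiableOn.div
    · exact (differentiableOn_const z).sub hd
    · exact (differentiableOn_const _).sub ((differentiableOn_const _).mul hd)
    · intro w hw
      exact denom_ne_zero hzlt (hmem hw)
  have hKm : Set.MapsTo K (Metric.ball 0 1) (Metric.ball 0 1) := by
    intro w hw
    rw [Metric.mem_ball, Complex.dist_eq, sub_zero]
    exact rho_lt_one hzlt (hmem hw)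
  have hK0 : K 0 = 0 := by simp [hK, ← hz0]
  have := Complex.norm_le_norm_of_mapsTo_ball hKd (hKm.mono_right Metric.ball_subset_closedBall) hK0 hs
  calc rho z (H s) = ‖K s‖ := rfl
  _ ≤ ‖s‖ := this

lemma real_sq_step {r s x : ℝ} (hr0 : 0 ≤ r) (hr1 : r < 1) (hs0 : 0 ≤ s) (hs1 : s < 1)
    (hx : x ≤ r * s) :
    (s - r) ^ 2 * (1 - 2 * x + (r * s) ^ 2) ≤ (r ^ 2 + s ^ 2 - 2 * x) * (1 - r * s) ^ 2 := by
  nlinarith [mul_nonneg (mul_nonneg (sub_nonneg.2 hx)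
    (by nlinarith : (0:ℝ) ≤ 1 - r ^ 2)) (by nlinarith : (0:ℝ) ≤ 1 - s ^ 2)]

lemma real_step {r s : ℝ} (hr0 : 0 ≤ r) (hr1 : r < 1) (hs0 : 0 ≤ s)
    (hfin : s - r ≤ (1 - r * s) / 2) : (1 - r) / 4 ≤ 1 - s := by
  nlinarith [mul_nonneg (sub_nonneg.2 hr1.le) (show (0:ℝ) ≤ 2 - r by linarith),
    mul_nonneg hr0 (show (0:ℝ) ≤ 1 - r * s - 2 * (s - r) by linarith)]

lemma sq_le_imp {a b : ℝ} (ha : 0 ≤ a) (hb : 0 ≤ b) (h : a ^ 2 ≤ b ^ 2) : a ≤ b := by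
  nlinarith

/-- step estimate: if the pseudo-hyperbolic distance is at most 1/2, then
`1 - |w|` is at least a quarter of `1 - |z|`. -/
lemma step_est {z w : ℂ} (hz : ‖z‖ < 1) (hw : ‖w‖ < 1)
    (hρ : rho z w ≤ 1 / 2) : (1 - ‖z‖) / 4 ≤ 1 - ‖w‖ := by
  set r := ‖z‖ with hr
  set s := ‖w‖ with hs
  have hr0 : 0 ≤ r := norm_nonneg z
  have hs0 : 0 ≤ s := norm_nonneg w
  rcases le_or_gt s r with h | h
  · linarith
  · set p := (starRingEnd ℂ) z * w with hp
    have hpabs : ‖p‖ = r * s := by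
      rw [hp, norm_mul, Complex.norm_conj]
    have hdne := denom_ne_zero hz hw
    set d := ‖1 - p‖ with hd
    have hdpos : 0 < d := norm_pos_iff.mpr hdne
    have hzw : ‖z - w‖ = rho z w * d := by
      rw [rho, norm_div, div_mul_cancel₀]
      exact hdpos.ne'
    have hx : |p.re| ≤ r * s := by
      rw [← hpabs]; exact Complex.abs_re_le_norm p
    have hnd : Complex.normSq (1 - p) = 1 - 2 * p.re + (r * s) ^ 2 := by
      have h4 : Complex.normSq p = (r * s) ^ 2 := by rw [← Complex.sq_norm, hpabs]
      rw [← h4]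
      simp [Complex.normSq_apply, Complex.sub_re, Complex.sub_im]
      ring
    have hnzw : Complex.normSq (z - w) = r ^ 2 + s ^ 2 - 2 * p.re := by
      rw [Complex.normSq_sub, ← Complex.sq_norm, ← Complex.sq_norm, ← hr, ← hs]
      have h5 : (z * (starRingEnd ℂ) w).re = p.re := by
        rw [hp, ← Complex.conj_re ((starRingEnd ℂ) z * w)]
        congr 1
        simp [mul_comm]
      rw [h5]
    have hsq : (s - r) ^ 2 * Complex.normSq (1 - p) ≤
        Complex.normSq (z - w) * (1 - r * s) ^ 2 := by
      rw [hnd, hnzw]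
      exact real_sq_step hr0 hz hs0 hw (abs_le.mp hx).2
    have hrs1 : r * s < 1 := by nlinarith
    have hlin : (s - r) * d ≤ ‖z - w‖ * (1 - r * s) := by
      apply sq_le_imp (mul_nonneg (by linarith) hdpos.le)
        (mul_nonneg (norm_nonneg _) (by linarith))
      have e1 : d ^ 2 = Complex.normSq (1 - p) := Complex.sq_norm _
      have e2 : ‖z - w‖ ^ 2 = Complex.normSq (z - w) := Complex.sq_norm _
      calc ((s - r) * d) ^ 2 = (s - r) ^ 2 * Complex.normSq (1 - p) := by rw [← e1]; ring
      _ ≤ Complex.normSq (z - w) * (1 - r * s) ^ 2 := hsq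
      _ = (‖z - w‖ * (1 - r * s)) ^ 2 := by rw [← e2]; ring
    have hfin : s - r ≤ (1 - r * s) / 2 := by
      have h2 : (s - r) * d ≤ (d / 2) * (1 - r * s) := by
        calc (s - r) * d ≤ ‖z - w‖ * (1 - r * s) := hlin
        _ = rho z w * d * (1 - r * s) := by rw [hzw]
        _ ≤ (1 / 2) * d * (1 - r * s) := by
            apply mul_le_mul_of_nonneg_right _ (by linarith)
            exact mul_le_mul_of_nonneg_right hρ hdpos.le
        _ = (d / 2) * (1 - r * s) := by ring
      nlinarith
    exact real_step hr0 hz hs0 hfin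

lemma dD_eq (z w : ℂ) : dD z w = (1/2) * Real.log ((1 + rho z w) / (1 - rho z w)) := rfl

lemma dD_nonneg {z w : ℂ} (hz : ‖z‖ < 1) (hw : ‖w‖ < 1) :
    0 ≤ dD z w := by
  rw [dD_eq]
  have h1 := rho_nonneg z w
  have h2 := rho_lt_one hz hw
  have h3 : (1:ℝ) ≤ (1 + rho z w) / (1 - rho z w) := by
    rw [le_div_iff₀ (by linarith)]; linarith
  have := Real.log_nonneg h3; linarith

/-- upper bound for `dD` in terms of the distances to the unit circle. -/
lemma dD_le_bound {z w : ℂ} (hz : ‖z‖ < 1) (hw : ‖w‖ < 1) :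
    dD z w ≤ (1/2) * (Real.log 16 - Real.log (1 - ‖z‖)
      - Real.log (1 - ‖w‖)) := by
  set r := ‖z‖ with hr
  set s := ‖w‖ with hs
  have hr0 : 0 ≤ r := norm_nonneg z
  have hs0 : 0 ≤ s := norm_nonneg w
  set ρ := rho z w with hρdef
  have hρ0 : 0 ≤ ρ := rho_nonneg z w
  have hρ1 : ρ < 1 := rho_lt_one hz hw
  set p := (starRingEnd ℂ) z * w with hp
  have hpabs : ‖p‖ = r * s := by rw [hp, norm_mul, Complex.norm_conj]
  have hdne := denom_ne_zero hz hw
  set d := ‖1 - p‖ with hd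
  have hdpos : 0 < d := norm_pos_iff.mpr hdne
  have hd2 : d ≤ 2 := by
    have h1 : d ≤ ‖(1:ℂ)‖ + ‖p‖ := by
      rw [hd]; exact (norm_sub_le 1 p)
    rw [hpabs] at h1
    have h2 : d ≤ 1 + r * s := by simpa using h1
    nlinarith
  have hnsne : Complex.normSq (1 - p) ≠ 0 := by
    rw [hp]; exact (Complex.normSq_pos.mpr hdne).ne'
  have hρsq : ρ ^ 2 * Complex.normSq (1 - p) = Complex.normSq (z - w) := by
    rw [hρdef, rho, norm_div, div_pow, Complex.sq_norm, Complex.sq_norm, ← hp]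
    exact div_mul_cancel₀ _ hnsne
  have hkey := normSq_key z w
  rw [← hp] at hkey
  have hnsq4 : Complex.normSq (1 - p) ≤ 4 := by
    have h3 : Complex.normSq (1 - p) = d ^ 2 := (Complex.sq_norm _).symm
    nlinarith
  have hnz : Complex.normSq z ≤ r := by
    rw [← Complex.sq_norm, ← hr]; nlinarith
  have hnw : Complex.normSq w ≤ s := by
    rw [← Complex.sq_norm, ← hs]; nlinarith
  have hzlt := normSq_lt_one hz
  have hwlt := normSq_lt_one hw
  have hprod : (1 - r) * (1 - s) ≤ (1 - Complex.normSq z) * (1 - Complex.normSq w) := by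
    apply mul_le_mul (by linarith) (by linarith) (by linarith) (by linarith)
  have h14 : (1 - r) * (1 - s) / 4 ≤ 1 - ρ ^ 2 := by
    have e : (1 - ρ ^ 2) * Complex.normSq (1 - p)
        = (1 - Complex.normSq z) * (1 - Complex.normSq w) := by
      rw [sub_mul, hρsq, one_mul, hkey]
    have hρ2 : 0 ≤ 1 - ρ ^ 2 := by nlinarith
    nlinarith [Complex.normSq_nonneg (1 - p)]
  have h8 : (1 - r) * (1 - s) / 8 ≤ 1 - ρ := by nlinarith
  have hposrs : 0 < (1 - r) * (1 - s) := by
    apply mul_pos <;> linarith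
  have hmain : (1 + ρ) / (1 - ρ) ≤ 16 / ((1 - r) * (1 - s)) := by
    rw [div_le_div_iff₀ (by linarith) hposrs]
    nlinarith
  rw [dD_eq, ← hρdef]
  have hlog := Real.log_le_log (div_pos (by linarith) (by linarith)) hmain
  rw [Real.log_div (ne_of_gt (by linarith : (0:ℝ) < 1 + ρ)) (ne_of_gt (by linarith : (0:ℝ) < 1 - ρ)),
    Real.log_div (by norm_num : (16:ℝ) ≠ 0) (ne_of_gt hposrs),
    Real.log_mul (ne_of_gt (by linarith : (0:ℝ) < 1 - r))
      (ne_of_gt (by linarith : (0:ℝ) < 1 - s))] at hlog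
  rw [Real.log_div (ne_of_gt (by linarith : (0:ℝ) < 1 + ρ))
    (ne_of_gt (by linarith : (0:ℝ) < 1 - ρ))]
  linarith

set_option maxHeartbeats 2000000 in
/-- First construction estimate in Proposition 6.1: if
`dist(ζ + t, ∂Ω) = 1/log(-t)` for all `t ≤ t₀ ≤ -e`, then
`lim_{t → -∞} d_Ω(ζ, ζ + t)/t² = 0`. -/
theorem stmt16 (Ω : Set ℂ) (hΩ : IsSCDomain Ω) (ζ : ℂ)
    (hζ : ∀ t : ℝ, t ≤ 0 → ζ + (t : ℂ) ∈ Ω)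
    (t₀ : ℝ) (ht₀ : t₀ ≤ -Real.exp 1)
    (hdist : ∀ t : ℝ, t ≤ t₀ →
      Metric.infDist (ζ + (t : ℂ)) (frontier Ω) = 1 / Real.log (-t))
    (f : ℂ → ℂ) (hf : DifferentiableOn ℂ f Ω) (hfbij : Set.BijOn f Ω unitDisc) :
    Filter.Tendsto (fun t : ℝ => dD (f ζ) (f (ζ + (t : ℂ))) / t ^ 2)
      Filter.atBot (nhds 0) := by
  obtain ⟨hOopen, -, -, -⟩ := hΩ
  have habs : ∀ {u : ℂ}, u ∈ Ω → ‖f u‖ < 1 := fun hu => hfbij.mapsTo hu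
  have hexp : (0:ℝ) < Real.exp 1 := Real.exp_pos 1
  have ht₀0 : t₀ ≤ 0 := by linarith
  have hζΩ : ζ ∈ Ω := by simpa using hζ 0 le_rfl
  have hfζ : ‖f ζ‖ < 1 := habs hζΩ
  have hmem : ∀ t : ℝ, t ≤ 0 → ‖f (ζ + (t:ℂ))‖ < 1 := fun t ht => habs (hζ t ht)
  set c₀ := 1 - ‖f (ζ + (t₀:ℂ))‖ with hc₀def
  have hc₀ : 0 < c₀ := by have := hmem t₀ ht₀0; rw [hc₀def]; linarith
  set A := (1/2) * (Real.log 16 - Real.log (1 - ‖f ζ‖) - Real.log c₀) + Real.log 2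
    with hAdef
  have hlog2 : 0 < Real.log 2 := Real.log_pos (by norm_num)
  -- KEY ESTIMATE
  have key : ∀ t : ℝ, t ≤ t₀ →
      dD (f ζ) (f (ζ + (t:ℂ))) ≤ A + (2*(t₀ - t)*Real.log (-t)) * Real.log 2 := by
    intro t ht
    have htneg : t ≤ -Real.exp 1 := le_trans ht ht₀
    have ht0 : t ≤ 0 := by linarith
    have hmt : Real.exp 1 ≤ -t := by linarith
    have hL1 : 1 ≤ Real.log (-t) := by
      rw [Real.le_log_iff_exp_le (by linarith : (0:ℝ) < -t)]
      simpa using hmt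
    set L := Real.log (-t) with hLdef
    set N := ⌈2*(t₀ - t)*L⌉₊ with hNdef
    have httd : 0 ≤ t₀ - t := by linarith
    have hceil : 2*(t₀-t)*L ≤ (N:ℝ) := Nat.le_ceil _
    set h := (t₀ - t)/(N:ℝ) with hhdef
    have hh0 : 0 ≤ h := div_nonneg httd (Nat.cast_nonneg N)
    have hNzero : N = 0 → t₀ - t = 0 := by
      intro h0
      rw [hNdef, Nat.ceil_eq_zero] at h0
      have : t₀ - t ≤ 0 := by nlinarith
      linarith
    have hNh : (N:ℝ) * h = t₀ - t := by
      rcases Nat.eq_zero_or_pos N with h0 | hpos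
      · rw [h0, hNzero h0]; simp
      · rw [hhdef]
        have : (N:ℝ) ≠ 0 := by exact_mod_cast hpos.ne'
        field_simp
    have hhle : h ≤ 1/(2*L) := by
      rcases Nat.eq_zero_or_pos N with h0 | hpos
      · rw [hhdef, hNzero h0]
        simp
        positivity
      · rw [hhdef, div_le_div_iff₀ (by exact_mod_cast hpos) (by linarith)]
        calc (t₀-t)*(2*L) = 2*(t₀-t)*L := by ring
        _ ≤ (N:ℝ) := hceil
        _ = 1*(N:ℝ) := by ring
    set q : ℕ → ℝ := fun k => t + k * h with hqdef
    have hqmem : ∀ k : ℕ, k ≤ N → t ≤ q k ∧ q k ≤ t₀ := by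
      intro k hk
      have hkh : 0 ≤ (k:ℝ) * h := mul_nonneg (Nat.cast_nonneg k) hh0
      have hkh2 : (k:ℝ) * h ≤ (N:ℝ) * h :=
        mul_le_mul_of_nonneg_right (Nat.cast_le.mpr hk) hh0
      rw [hNh] at hkh2
      constructor
      · simp only [hqdef]; linarith
      · simp only [hqdef]; linarith
    -- chain estimate
    have chain : ∀ j : ℕ, j ≤ N → c₀ / 4^j ≤ 1 - ‖f (ζ + ((q (N - j) : ℝ):ℂ))‖ := by
      intro j
      induction j with
      | zero =>
        intro _
        have hqN : q (N - 0) = t₀ := by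
          simp only [Nat.sub_zero, hqdef]
          rw [hNh]; ring
        rw [hqN, pow_zero, div_one, ← hc₀def]
      | succ j ih =>
        intro hj1
        have ihv := ih (by omega)
        have hNj : N - j = (N - (j+1)) + 1 := by omega
        rw [hNj] at ihv
        set k := N - (j+1) with hkdef
        obtain ⟨hqk1, hqk2⟩ := hqmem k (by omega)
        obtain ⟨hqk1', hqk2'⟩ := hqmem (k+1) (by omega)
        have haΩ : ζ + ((q k : ℝ):ℂ) ∈ Ω := hζ _ (by linarith)
        have hbΩ : ζ + ((q (k+1) : ℝ):ℂ) ∈ Ω := hζ _ (by linarith)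
        set a := ζ + ((q k : ℝ):ℂ) with hadef
        set b := ζ + ((q (k+1) : ℝ):ℂ) with hbdef
        have hDeq : Metric.infDist a (frontier Ω) = 1 / Real.log (-(q k)) := hdist _ hqk2
        have hlogqk1 : 1 ≤ Real.log (-(q k)) := by
          rw [Real.le_log_iff_exp_le (by linarith : (0:ℝ) < -(q k))]
          linarith
        have hlogqk2 : Real.log (-(q k)) ≤ L := by
          rw [hLdef]
          exact Real.log_le_log (by linarith) (by linarith)
        set D := 1 / Real.log (-(q k)) with hDdef
        have hDpos : 0 < D := by rw [hDdef]; positivity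
        have hDge : 1/L ≤ D := by
          rw [hDdef]
          exact one_div_le_one_div_of_le (by linarith) hlogqk2
        have hhD : h ≤ D/2 := by
          have h1L : 1/(2*L) = (1/L)/2 := by ring
          linarith
        have hball : Metric.ball a D ⊆ Ω := by
          rw [← hDeq]
          exact ball_subset_of_frontier hOopen haΩ
        set H : ℂ → ℂ := fun w => f (a + (D:ℂ)*w) with hHdef
        have hmball : ∀ w : ℂ, w ∈ Metric.ball (0:ℂ) 1 → a + (D:ℂ)*w ∈ Ω := by
          intro w hw
          apply hball
          rw [Metric.mem_ball] at hw ⊢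
          rw [Complex.dist_eq, sub_zero] at hw
          rw [Complex.dist_eq]
          have habsD : ‖(D:ℂ)*w‖ < D := by
            rw [norm_mul, Complex.norm_real, Real.norm_eq_abs, abs_of_pos hDpos]
            nlinarith [norm_nonneg w]
          simpa using habsD
        have hHd : DifferentiableOn ℂ H (Metric.ball 0 1) := by
          apply DifferentiableOn.comp hf
          · exact ((differentiable_const a).add
              ((differentiable_const ((D:ℝ):ℂ)).mul differentiable_id)).differentiableOn
          · intro w hw; exact hmball w hw
        have hHm : Set.MapsTo H (Metric.ball 0 1) (Metric.ball 0 1) := by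
          intro w hw
          rw [Metric.mem_ball, Complex.dist_eq, sub_zero]
          exact habs (hmball w hw)
        have hsabs : ‖(((h/D : ℝ)):ℂ)‖ < 1 := by
          rw [Complex.norm_real, Real.norm_eq_abs, abs_of_nonneg (div_nonneg hh0 hDpos.le)]
          rw [div_lt_one hDpos]
          linarith
        have hsp := schwarz_pick hHd hHm hsabs
        have hH0 : H 0 = f a := by simp [hHdef]
        have hHs : H ((h/D : ℝ):ℂ) = f b := by
          rw [hHdef]
          simp only []
          congr 1
          rw [hbdef, hadef]
          have hDh : ((D:ℝ):ℂ) * (((h/D : ℝ)):ℂ) = ((h:ℝ):ℂ) := by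
            rw [← Complex.ofReal_mul]
            congr 1
            field_simp
          rw [hDh]
          have hq1 : q (k+1) = q k + h := by
            simp only [hqdef]
            push_cast
            ring
          rw [hq1]
          push_cast
          ring
        rw [hH0, hHs] at hsp
        have hρ : rho (f a) (f b) ≤ 1/2 := by
          refine le_trans hsp ?_
          rw [Complex.norm_real, Real.norm_eq_abs, abs_of_nonneg (div_nonneg hh0 hDpos.le)]
          rw [div_le_iff₀ hDpos]
          linarith
        have hρ' : rho (f b) (f a) ≤ 1/2 := by rw [rho_comm]; exact hρ
        have hstep := step_est (habs hbΩ) (habs haΩ) hρ'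
        calc c₀/4^(j+1) = (c₀/4^j)/4 := by rw [pow_succ]; ring
        _ ≤ (1 - ‖f b‖)/4 := by
            apply div_le_div_of_nonneg_right ihv
            norm_num
        _ ≤ 1 - ‖f a‖ := hstep
    have hchain := chain N le_rfl
    have hq0 : q (N - N) = t := by simp [hqdef]
    rw [hq0] at hchain
    -- conclude the key estimate
    have hwlt := hmem t ht0
    have hbd := dD_le_bound hfζ hwlt
    have hlogle : Real.log c₀ - (N:ℝ) * Real.log 4 ≤
        Real.log (1 - ‖f (ζ + (t:ℂ))‖) := by
      have h1 : Real.log (c₀ / 4^N) ≤ Real.log (1 - ‖f (ζ + (t:ℂ))‖) :=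
        Real.log_le_log (by positivity) hchain
      rw [Real.log_div hc₀.ne' (by positivity), Real.log_pow] at h1
      linarith
    have hlog4 : Real.log 4 = 2 * Real.log 2 := by
      rw [show (4:ℝ) = 2^2 by norm_num, Real.log_pow]
      push_cast; ring
    have hNbd : (N:ℝ) ≤ 2*(t₀-t)*L + 1 := by
      rw [hNdef]
      have := Nat.ceil_lt_add_one (by positivity : (0:ℝ) ≤ 2*(t₀-t)*L)
      linarith
    have hlog4nn : 0 ≤ Real.log 4 := by linarith
    calc dD (f ζ) (f (ζ + (t:ℂ)))
        ≤ (1/2) * (Real.log 16 - Real.log (1 - ‖f ζ‖)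
            - Real.log (1 - ‖f (ζ + (t:ℂ))‖)) := hbd
    _ ≤ (1/2) * (Real.log 16 - Real.log (1 - ‖f ζ‖)
            - (Real.log c₀ - (N:ℝ) * Real.log 4)) := by linarith
    _ = (1/2) * (Real.log 16 - Real.log (1 - ‖f ζ‖) - Real.log c₀)
          + (N:ℝ) * Real.log 2 := by rw [hlog4]; ring
    _ ≤ (1/2) * (Real.log 16 - Real.log (1 - ‖f ζ‖) - Real.log c₀)
          + (2*(t₀-t)*L + 1) * Real.log 2 := by nlinarith
    _ = A + (2*(t₀ - t)*L) * Real.log 2 := by rw [hAdef]; ring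
  -- LIMIT
  have hF : Filter.Tendsto
      (fun x : ℝ => (A + (2*(t₀ + x)*Real.log x) * Real.log 2) / x^2)
      Filter.atTop (nhds 0) := by
    have h1 : Filter.Tendsto (fun x : ℝ => A / x^2) Filter.atTop (nhds 0) :=
      Filter.Tendsto.div_atTop tendsto_const_nhds (tendsto_pow_atTop (by norm_num))
    have hlogx : Filter.Tendsto (fun x : ℝ => Real.log x / x) Filter.atTop (nhds 0) := by
      have := Real.isLittleO_log_id_atTop.tendsto_div_nhds_zero
      simpa using this
    have hinv : Filter.Tendsto (fun x : ℝ => x⁻¹) Filter.atTop (nhds 0) :=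
      tendsto_inv_atTop_zero
    have hlogx2 : Filter.Tendsto (fun x : ℝ => Real.log x / x^2) Filter.atTop (nhds 0) := by
      have hmul := hlogx.mul hinv
      rw [mul_zero] at hmul
      apply hmul.congr'
      filter_upwards [eventually_gt_atTop (0:ℝ)] with x hx
      rw [← div_eq_mul_inv, div_div, ← sq]
    have hsum : Filter.Tendsto
        (fun x : ℝ => A / x^2 + ((2*t₀*Real.log 2) * (Real.log x / x^2)
          + (2*Real.log 2) * (Real.log x / x))) Filter.atTop (nhds 0) := by
      have h2 := (tendsto_const_nhds (x := (2*t₀*Real.log 2))).mul hlogx2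
      have h3 := (tendsto_const_nhds (x := (2*Real.log 2))).mul hlogx
      rw [mul_zero] at h2 h3
      have := h1.add (h2.add h3)
      simpa using this
    apply hsum.congr'
    filter_upwards [eventually_gt_atTop (0:ℝ)] with x hx
    have hx2 : x^2 ≠ 0 := by positivity
    field_simp [hx.ne']
  have hup : Filter.Tendsto
      (fun t : ℝ => (A + (2*(t₀ - t)*Real.log (-t)) * Real.log 2) / t^2)
      Filter.atBot (nhds 0) := by
    have hcomp := hF.comp tendsto_neg_atBot_atTop
    have heq : ((fun x : ℝ => (A + (2*(t₀ + x)*Real.log x) * Real.log 2) / x^2) ∘ (fun t => -t))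
        = (fun t : ℝ => (A + (2*(t₀ - t)*Real.log (-t)) * Real.log 2) / t^2) := by
      funext t
      simp only [Function.comp_apply, neg_neg]
      rw [neg_sq]
      ring_nf
    rwa [heq] at hcomp
  refine tendsto_of_tendsto_of_tendsto_of_le_of_le' tendsto_const_nhds hup ?_ ?_
  · filter_upwards [eventually_le_atBot (0:ℝ)] with t ht
    exact div_nonneg (dD_nonneg hfζ (hmem t ht)) (sq_nonneg t)
  · filter_upwards [eventually_le_atBot (min t₀ (-1))] with t ht
    have ht1 : t ≤ t₀ := le_trans ht (min_le_left _ _)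
    have ht2 : t ≤ -1 := le_trans ht (min_le_right _ _)
    have htne : t ≠ 0 := by linarith
    have ht2pos : (0:ℝ) < t^2 := by positivity
    exact (div_le_div_iff_of_pos_right ht2pos).mpr (key t ht1)
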